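/- arXiv:2306.16365 — 4 statements merged into one kernel-verified Lean document; each statement's English description precedes it below -/
import Mathlib

section
/- Let P ∈ {0,1}^{k×l} be a 0–1 pattern with rows i_0, i_1 and a column j with 1 < j < l such that P(i_0, j) = 1 is the only 1-entry in column j, and P(i_0, j+1) = P(i_1, j−1) = P(i_1, j+1) = 1. Let P' ∈ {0,1}^{k×(l−1)} be P with column j removed. Then there is a constant C (depending only on P) such that Ex(P, n) ≤ C · Ex(P', n) · log n for all n ≥ 2. -/
/-- `A` contains the pattern `P`: there are strictly increasing row and column maps
carrying the 1-entries of `P` to 1-entries of `A`. -/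
def PatContains {k l m n : ℕ} (P : Fin k → Fin l → Prop) (A : Fin m → Fin n → Bool) : Prop :=
  ∃ (r : Fin k → Fin m) (c : Fin l → Fin n),
    StrictMono r ∧ StrictMono c ∧ ∀ i j, P i j → A (r i) (c j) = true

/-- The number of 1-entries (weight) of a 0–1 matrix. -/
def wt {m n : ℕ} (A : Fin m → Fin n → Bool) : ℕ :=
  (Finset.univ.filter (fun p : Fin m × Fin n => A p.1 p.2 = true)).card

/-- `matEx P n` is the maximum weight of an `n × n` 0–1 matrix avoiding the pattern `P`. -/
noncomputable def matEx {k l : ℕ} (P : Fin k → Fin l → Prop) (n : ℕ) : ℕ :=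
  sSup {w | ∃ A : Fin n → Fin n → Bool, ¬ PatContains P A ∧ wt A = w}

namespace PT13


lemma wt_le {m n : ℕ} (A : Fin m → Fin n → Bool) : wt A ≤ m * n := by
  classical
  calc wt A ≤ (Finset.univ : Finset (Fin m × Fin n)).card := Finset.card_filter_le _ _
  _ = m * n := by simp

lemma bdd {k l n : ℕ} (P : Fin k → Fin l → Prop) :
    BddAbove {w | ∃ A : Fin n → Fin n → Bool, ¬ PatContains P A ∧ wt A = w} :=
  ⟨n * n, fun w ⟨A, _, hw⟩ => hw ▸ wt_le A⟩

lemma le_matEx {k l n : ℕ} (P : Fin k → Fin l → Prop) (A : Fin n → Fin n → Bool)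
    (hA : ¬ PatContains P A) : wt A ≤ matEx P n :=
  le_csSup (bdd P) ⟨A, hA, rfl⟩

lemma exists_max {k l : ℕ} (P : Fin k → Fin l → Prop) (i : Fin k) (jj : Fin l) (h : P i jj)
    (n : ℕ) :
    ∃ A : Fin n → Fin n → Bool, ¬ PatContains P A ∧ wt A = matEx P n := by
  have h0 : ¬ PatContains P (fun _ _ => false : Fin n → Fin n → Bool) := by
    rintro ⟨r, c, -, -, hcond⟩
    simpa using hcond i jj h
  have hne : {w | ∃ A : Fin n → Fin n → Bool, ¬ PatContains P A ∧ wt A = w}.Nonempty :=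
    ⟨0, ⟨(fun _ _ => false), h0, by simp [wt]⟩⟩
  have := Nat.sSup_mem hne (bdd P)
  exact this

lemma n_le_matEx {k l n : ℕ} (P : Fin k → Fin l → Prop) (i : Fin k) (c1 c2 : Fin l)
    (hc : c1 < c2) (h1 : P i c1) (h2 : P i c2) : n ≤ matEx P n := by
  classical
  rcases Nat.eq_zero_or_pos n with h0 | hn
  · simp [h0]
  set A : Fin n → Fin n → Bool := fun _ b => decide (b.val = 0) with hAdef
  have havoid : ¬ PatContains P A := by
    rintro ⟨r, c, hr, hcm, hcond⟩
    have e1 := hcond i c1 h1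
    have e2 := hcond i c2 h2
    simp only [hAdef, decide_eq_true_eq] at e1 e2
    have := hcm hc
    rw [Fin.lt_def] at this
    omega
  have hwt : n ≤ wt A := by
    have : (Finset.univ : Finset (Fin n)).card ≤
        (Finset.univ.filter (fun p : Fin n × Fin n => A p.1 p.2 = true)).card := by
      apply Finset.card_le_card_of_injOn (fun a => (a, (⟨0, hn⟩ : Fin n)))
      · intro a _
        simp [hAdef]
      · intro a _ b _ hab
        exact congrArg Prod.fst hab
    simpa [wt] using this
  exact hwt.trans (le_matEx P A havoid)



def IsPrev {n : ℕ} (A : Fin n → Fin n → Bool) (a b b' : Fin n) : Prop :=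
  b' < b ∧ A a b' = true ∧ ∀ b'', b' < b'' → b'' < b → A a b'' = false

open Classical in
noncomputable def countedAt {n : ℕ} (A : Fin n → Fin n → Bool) (t : ℕ) (a b : Fin n) : Bool :=
  decide (A a b = true ∧ ∃ b', IsPrev A a b b' ∧
    b.val / 2 ^ t = b'.val / 2 ^ t ∧ b.val / 2 ^ (t - 1) ≠ b'.val / 2 ^ (t - 1))

lemma countedAt_iff {n : ℕ} (A : Fin n → Fin n → Bool) (t : ℕ) (a b : Fin n) :
    countedAt A t a b = true ↔ (A a b = true ∧ ∃ b', IsPrev A a b b' ∧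
      b.val / 2 ^ t = b'.val / 2 ^ t ∧ b.val / 2 ^ (t - 1) ≠ b'.val / 2 ^ (t - 1)) := by
  simp [countedAt]

lemma block_lt {n : ℕ} (A : Fin n → Fin n → Bool) (t : ℕ) (ht : 1 ≤ t) {a b b₂ : Fin n}
    (hb : countedAt A t a b = true) (hb₂ : countedAt A t a b₂ = true) (hlt : b < b₂) :
    b.val / 2 ^ t < b₂.val / 2 ^ t := by
  rw [countedAt_iff] at hb hb₂
  obtain ⟨hA, b', ⟨hb'lt, hb'A, hbet⟩, hsame, hdiff⟩ := hb
  obtain ⟨hA₂, b₂', ⟨hlt₂, hA₂', hbet₂⟩, hsame₂, hdiff₂⟩ := hb₂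
  by_contra hcon
  have heq : b.val / 2 ^ t = b₂.val / 2 ^ t :=
    le_antisymm (Nat.div_le_div_right (le_of_lt hlt)) (not_lt.mp hcon)
  have hble : b ≤ b₂' := by
    by_contra h
    have := hbet₂ b (not_le.mp h) hlt
    rw [hA] at this
    exact absurd this (by simp)
  obtain ⟨u, rfl⟩ : ∃ u, t = u + 1 := ⟨t - 1, by omega⟩
  simp only [Nat.add_sub_cancel] at hdiff hdiff₂
  have hpow : ∀ x : ℕ, x / 2 ^ (u + 1) = x / 2 ^ u / 2 := by
    intro x
    rw [Nat.div_div_eq_div_mul, pow_succ]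
  rw [hpow, hpow] at hsame hsame₂ heq
  have d1 : b'.val / 2 ^ u ≤ b.val / 2 ^ u := Nat.div_le_div_right (le_of_lt hb'lt)
  have d2 : b₂'.val / 2 ^ u ≤ b₂.val / 2 ^ u := Nat.div_le_div_right (le_of_lt hlt₂)
  have d3 : b.val / 2 ^ u ≤ b₂'.val / 2 ^ u := Nat.div_le_div_right hble
  omega

lemma wt_le_sum {n : ℕ} (A : Fin n → Fin n → Bool) :
    wt A ≤ n + ∑ t ∈ Finset.Icc 1 (Nat.log 2 n + 1), wt (countedAt A t) := by
  classical
  set T := Nat.log 2 n + 1 with hT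
  set Lead : Finset (Fin n × Fin n) :=
    Finset.univ.filter (fun p => A p.1 p.2 = true ∧ ∀ b' : Fin n, b' < p.2 → A p.1 b' = false)
    with hLead
  have hsub : Finset.univ.filter (fun p : Fin n × Fin n => A p.1 p.2 = true) ⊆
      Lead ∪ (Finset.Icc 1 T).biUnion
        (fun t => Finset.univ.filter (fun p : Fin n × Fin n => countedAt A t p.1 p.2 = true)) := by
    rintro ⟨a, b⟩ hp
    rw [Finset.mem_filter] at hp
    have hab : A a b = true := hp.2
    by_cases hlead : ∀ b' : Fin n, b' < b → A a b' = false
    · exact Finset.mem_union_left _ (by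
        rw [hLead, Finset.mem_filter]
        exact ⟨Finset.mem_univ _, hab, hlead⟩)
    · push_neg at hlead
      obtain ⟨b₀, hb₀lt, hb₀⟩ := hlead
      have hb₀' : A a b₀ = true := by
        cases h : A a b₀ with
        | false => exact absurd h hb₀
        | true => rfl
      -- take the maximal previous 1
      set F : Finset (Fin n) := Finset.univ.filter (fun b' => b' < b ∧ A a b' = true) with hF
      have hFne : F.Nonempty := ⟨b₀, by simp [hF, hb₀lt, hb₀']⟩
      set b' : Fin n := F.max' hFne with hb'
      have hb'mem : b' ∈ F := F.max'_mem hFne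
      rw [hF, Finset.mem_filter] at hb'mem
      have hprev : IsPrev A a b b' := by
        refine ⟨hb'mem.2.1, hb'mem.2.2, ?_⟩
        intro b'' h1 h2
        by_contra hcon
        have hb''t : A a b'' = true := by
          cases h : A a b'' with
          | false => exact absurd h hcon
          | true => rfl
        have : b'' ∈ F := by simp [hF, h2, hb''t]
        exact absurd (F.le_max' b'' this) (not_le.mpr h1)
      -- find the separation level
      have hex : ∃ t, b.val / 2 ^ t = b'.val / 2 ^ t := by
        refine ⟨T, ?_⟩
        have h2T : n ≤ 2 ^ T := le_of_lt (Nat.lt_pow_succ_log_self (by norm_num) n)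
        rw [Nat.div_eq_of_lt (lt_of_lt_of_le b.isLt h2T),
          Nat.div_eq_of_lt (lt_of_lt_of_le b'.isLt h2T)]
      set t := Nat.find hex with ht
      have htspec : b.val / 2 ^ t = b'.val / 2 ^ t := Nat.find_spec hex
      have htle : t ≤ T := Nat.find_min' hex (by
        have h2T : n ≤ 2 ^ T := le_of_lt (Nat.lt_pow_succ_log_self (by norm_num) n)
        rw [Nat.div_eq_of_lt (lt_of_lt_of_le b.isLt h2T),
          Nat.div_eq_of_lt (lt_of_lt_of_le b'.isLt h2T)])
      have ht1 : 1 ≤ t := by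
        rcases Nat.eq_zero_or_pos t with h0 | h1
        · exfalso
          rw [h0] at htspec
          simp only [pow_zero, Nat.div_one] at htspec
          have : b' < b := hprev.1
          rw [Fin.lt_def] at this
          omega
        · exact h1
      have htmin : b.val / 2 ^ (t - 1) ≠ b'.val / 2 ^ (t - 1) :=
        Nat.find_min hex (by omega)
      apply Finset.mem_union_right
      rw [Finset.mem_biUnion]
      refine ⟨t, Finset.mem_Icc.mpr ⟨ht1, htle⟩, ?_⟩
      rw [Finset.mem_filter]
      exact ⟨Finset.mem_univ _, (countedAt_iff A t a b).mpr ⟨hab, b', hprev, htspec, htmin⟩⟩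
  have hLeadcard : Lead.card ≤ n := by
    have : Lead.card ≤ (Finset.univ : Finset (Fin n)).card := by
      apply Finset.card_le_card_of_injOn (fun p => p.1)
      · intro p _; exact Finset.mem_univ _
      · rintro ⟨a1, b1⟩ hp1 ⟨a2, b2⟩ hp2 h
        simp only at h
        subst h
        rw [Finset.mem_coe, hLead, Finset.mem_filter] at hp1 hp2
        have hb : b1 = b2 := by
          rcases lt_trichotomy b1 b2 with h | h | h
          · have := hp2.2.2 b1 h
            rw [hp1.2.1] at this
            exact absurd this (by simp)
          · exact h
          · have := hp1.2.2 b2 h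
            rw [hp2.2.1] at this
            exact absurd this (by simp)
        rw [hb]
        -- goal may already be closed
    simpa using this
  calc wt A ≤ (Lead ∪ (Finset.Icc 1 T).biUnion _).card := Finset.card_le_card hsub
  _ ≤ Lead.card + ((Finset.Icc 1 T).biUnion _).card := Finset.card_union_le _ _
  _ ≤ n + ∑ t ∈ Finset.Icc 1 T, wt (countedAt A t) := by
      apply Nat.add_le_add hLeadcard
      exact Finset.card_biUnion_le

lemma counted_avoid (k l : ℕ) (P : Fin k → Fin l → Prop)
    (i₀ i₁ : Fin k) (j : Fin l)
    (hj1 : 0 < j.val) (hj2 : j.val + 1 < l)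
    (honly : P i₀ j ∧ ∀ i, P i j → i = i₀)
    (h1 : P i₀ ⟨j.val + 1, hj2⟩)
    (h2 : P i₁ ⟨j.val - 1, (by omega : j.val - 1 + 0 < l)⟩)
    (h3 : P i₁ ⟨j.val + 1, hj2⟩)
    {n : ℕ} (A : Fin n → Fin n → Bool) (hA : ¬ PatContains P A)
    (t : ℕ) (ht : 1 ≤ t) :
    ¬ PatContains (fun (i : Fin k) (c : Fin (l - 1)) =>
        P i ⟨if c.val < j.val then c.val else c.val + 1,
              (by have := c.isLt; split <;> omega : (if c.val < j.val then c.val else c.val + 1) + 0 < l)⟩) (countedAt A t) := by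
  rintro ⟨r, c, hr, hc, hcond⟩
  apply hA
  have mem' : ∀ (i : Fin k) (c' : Fin (l - 1)) (q : Fin l),
      ((if c'.val < j.val then c'.val else c'.val + 1) = q.val) →
      ((fun (i : Fin k) (c : Fin (l - 1)) =>
        P i ⟨if c.val < j.val then c.val else c.val + 1,
              (by have := c.isLt; split <;> omega : (if c.val < j.val then c.val else c.val + 1) + 0 < l)⟩) i c' ↔ P i q) := by
    intro i c' q h
    exact iff_of_eq (congrArg (P i) (Fin.ext h))
  have hjmlt : j.val - 1 < l - 1 := by omega
  have hjjlt : j.val < l - 1 := by omega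
  have hjm1 : (fun (i : Fin k) (c : Fin (l - 1)) =>
      P i ⟨if c.val < j.val then c.val else c.val + 1,
            (by have := c.isLt; split <;> omega : (if c.val < j.val then c.val else c.val + 1) + 0 < l)⟩) i₁ ⟨j.val - 1, hjmlt⟩ :=
    (mem' i₁ ⟨j.val - 1, hjmlt⟩ ⟨j.val - 1, (by omega : j.val - 1 + 0 < l)⟩
      (by simp only [Fin.val_mk]; split_ifs <;> omega)).mpr h2
  have hjj0 : (fun (i : Fin k) (c : Fin (l - 1)) =>
      P i ⟨if c.val < j.val then c.val else c.val + 1,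
            (by have := c.isLt; split <;> omega : (if c.val < j.val then c.val else c.val + 1) + 0 < l)⟩) i₀ ⟨j.val, hjjlt⟩ :=
    (mem' i₀ ⟨j.val, hjjlt⟩ ⟨j.val + 1, hj2⟩
      (by simp only [Fin.val_mk]; split_ifs <;> omega)).mpr h1
  have hjj1 : (fun (i : Fin k) (c : Fin (l - 1)) =>
      P i ⟨if c.val < j.val then c.val else c.val + 1,
            (by have := c.isLt; split <;> omega : (if c.val < j.val then c.val else c.val + 1) + 0 < l)⟩) i₁ ⟨j.val, hjjlt⟩ :=
    (mem' i₁ ⟨j.val, hjjlt⟩ ⟨j.val + 1, hj2⟩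
      (by simp only [Fin.val_mk]; split_ifs <;> omega)).mpr h3
  have e_m1 := hcond i₁ ⟨j.val - 1, hjmlt⟩ hjm1
  have e_j1 := hcond i₁ ⟨j.val, hjjlt⟩ hjj1
  have e_j0 := hcond i₀ ⟨j.val, hjjlt⟩ hjj0
  have hcjmjj : c ⟨j.val - 1, hjmlt⟩ < c ⟨j.val, hjjlt⟩ :=
    hc (by simp only [Fin.mk_lt_mk]; omega)
  have sep : (c ⟨j.val - 1, hjmlt⟩).val / 2 ^ t < (c ⟨j.val, hjjlt⟩).val / 2 ^ t :=
    block_lt A t ht e_m1 e_j1 hcjmjj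
  obtain ⟨hA0, d, ⟨hdlt, hdA, -⟩, hsame, -⟩ := (countedAt_iff A t (r i₀) (c ⟨j.val, hjjlt⟩)).mp e_j0
  have hd_gt : (c ⟨j.val - 1, hjmlt⟩).val < d.val := by
    by_contra hcon
    have hdd : d.val / 2 ^ t ≤ (c ⟨j.val - 1, hjmlt⟩).val / 2 ^ t :=
      Nat.div_le_div_right (by omega)
    omega
  have hcle : ∀ (x y : ℕ) (hx : x < l - 1) (hy : y < l - 1), x ≤ y →
      c ⟨x, hx⟩ ≤ c ⟨y, hy⟩ := by
    intro x y hx hy hxy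
    exact hc.monotone (by simp only [Fin.le_def, Fin.val_mk]; omega)
  have hclt : ∀ (x y : ℕ) (hx : x < l - 1) (hy : y < l - 1), x < y →
      c ⟨x, hx⟩ < c ⟨y, hy⟩ := by
    intro x y hx hy hxy
    exact hc (by simp only [Fin.mk_lt_mk]; omega)
  refine ⟨r, fun q => if hq : q.val < j.val then c ⟨q.val, by omega⟩
      else if hqe : q.val = j.val then d
      else c ⟨q.val - 1, by have := q.isLt; omega⟩, hr, ?_, ?_⟩
  · intro q1 q2 h12
    rw [Fin.lt_def] at h12
    simp only
    split_ifs with ha hb hb hc1 hc1 hc2 hc2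
    · exact hclt _ _ _ _ (by omega)
    · exact lt_of_le_of_lt (hcle _ _ _ hjmlt (by omega)) (Fin.lt_def.mpr hd_gt)
    · exact hclt _ _ _ _ (by omega)
    · exfalso; omega
    · exfalso; omega
    · exact lt_of_lt_of_le (Fin.lt_def.mpr (show d.val < (c ⟨j.val, hjjlt⟩).val from hdlt))
        (hcle _ _ hjjlt _ (by omega))
    · exfalso; omega
    · exfalso; omega
    · exact hclt _ _ _ _ (by omega)
  · intro i q hPq
    simp only
    split_ifs with hq hqe
    · have := hcond i ⟨q.val, by omega⟩
        ((mem' i ⟨q.val, by omega⟩ q (by simp only [Fin.val_mk]; split_ifs <;> omega)).mpr hPq)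
      exact ((countedAt_iff A t _ _).mp this).1
    · have hiq : i = i₀ := honly.2 i (by rwa [show q = j from Fin.ext hqe] at hPq)
      rw [hiq]
      exact hdA
    · have := hcond i ⟨q.val - 1, by have := q.isLt; omega⟩
        ((mem' i ⟨q.val - 1, by have := q.isLt; omega⟩ q
          (by simp only [Fin.val_mk]; split_ifs <;> omega)).mpr hPq)
      exact ((countedAt_iff A t _ _).mp this).1


end PT13

/-- Pach–Tardos: if column `j` of `P` has its only 1 at `(i₀,j)` and
`P(i₀,j+1) = P(i₁,j−1) = P(i₁,j+1) = 1`, and `P'` is `P` with column `j` removed, then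
`Ex(P,n) = O(Ex(P',n) · log n)`. -/
theorem stmt13 (k l : ℕ) (P : Fin k → Fin l → Prop)
    (i₀ i₁ : Fin k) (j : Fin l)
    (hj1 : 0 < j.val) (hj2 : j.val + 1 < l)
    (honly : P i₀ j ∧ ∀ i, P i j → i = i₀)
    (h1 : P i₀ ⟨j.val + 1, hj2⟩)
    (h2 : P i₁ ⟨j.val - 1, by omega⟩)
    (h3 : P i₁ ⟨j.val + 1, hj2⟩) :
    ∃ C : ℝ, ∀ n : ℕ, 2 ≤ n →
      (matEx P n : ℝ) ≤
        C * (matEx (fun (i : Fin k) (c : Fin (l - 1)) =>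
              P i ⟨if c.val < j.val then c.val else c.val + 1,
                    by have := c.isLt; split <;> omega⟩) n : ℝ) * Real.log n := by
  classical
  set P' : Fin k → Fin (l - 1) → Prop := fun (i : Fin k) (c : Fin (l - 1)) =>
    P i ⟨if c.val < j.val then c.val else c.val + 1,
          by have := c.isLt; split <;> omega⟩ with hP'def
  refine ⟨3 / Real.log 2, ?_⟩
  intro n hn
  -- facts about P'
  have hjmlt : j.val - 1 < l - 1 := by omega
  have hjjlt : j.val < l - 1 := by omega
  have hP'm : P' i₁ ⟨j.val - 1, hjmlt⟩ := by
    rw [hP'def]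
    exact (iff_of_eq (congrArg (P i₁) (Fin.ext (show
      (if (⟨j.val - 1, hjmlt⟩ : Fin (l - 1)).val < j.val then (⟨j.val - 1, hjmlt⟩ : Fin (l - 1)).val
        else (⟨j.val - 1, hjmlt⟩ : Fin (l - 1)).val + 1) = (⟨j.val - 1, by omega⟩ : Fin l).val
      by simp only [Fin.val_mk]; split_ifs <;> omega)))).mpr h2
  have hP'j : P' i₁ ⟨j.val, hjjlt⟩ := by
    rw [hP'def]
    exact (iff_of_eq (congrArg (P i₁) (Fin.ext (show
      (if (⟨j.val, hjjlt⟩ : Fin (l - 1)).val < j.val then (⟨j.val, hjjlt⟩ : Fin (l - 1)).val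
        else (⟨j.val, hjjlt⟩ : Fin (l - 1)).val + 1) = (⟨j.val + 1, hj2⟩ : Fin l).val
      by simp only [Fin.val_mk]; split_ifs <;> omega)))).mpr h3
  have hE'n : n ≤ matEx P' n :=
    PT13.n_le_matEx P' i₁ ⟨j.val - 1, hjmlt⟩ ⟨j.val, hjjlt⟩
      (by simp only [Fin.mk_lt_mk]; omega) hP'm hP'j
  -- the extremal matrix
  obtain ⟨A, hA, hwt⟩ := PT13.exists_max P i₀ j honly.1 n
  set T := Nat.log 2 n + 1 with hT
  have hcover : wt A ≤ n + ∑ t ∈ Finset.Icc 1 T, wt (PT13.countedAt A t) :=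
    PT13.wt_le_sum A
  have heach : ∀ t ∈ Finset.Icc 1 T, wt (PT13.countedAt A t) ≤ matEx P' n := by
    intro t htIcc
    rw [Finset.mem_Icc] at htIcc
    exact PT13.le_matEx P' _ (PT13.counted_avoid k l P i₀ i₁ j hj1 hj2 honly h1 h2 h3 A hA t htIcc.1)
  have hsum : ∑ t ∈ Finset.Icc 1 T, wt (PT13.countedAt A t) ≤ T * matEx P' n := by
    calc ∑ t ∈ Finset.Icc 1 T, wt (PT13.countedAt A t)
        ≤ ∑ _t ∈ Finset.Icc 1 T, matEx P' n := Finset.sum_le_sum heach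
      _ = T * matEx P' n := by rw [Finset.sum_const, Nat.Icc_eq_range', smul_eq_mul]; simp
  have hmain : matEx P n ≤ (Nat.log 2 n + 2) * matEx P' n := by
    have : matEx P n ≤ n + T * matEx P' n := by
      rw [← hwt]; exact hcover.trans (Nat.add_le_add_left hsum n)
    calc matEx P n ≤ n + T * matEx P' n := this
      _ ≤ matEx P' n + T * matEx P' n := Nat.add_le_add_right hE'n _
      _ = (T + 1) * matEx P' n := by ring
      _ = (Nat.log 2 n + 2) * matEx P' n := by rw [hT]
  -- real arithmetic
  have hlog2 : (0:ℝ) < Real.log 2 := Real.log_pos (by norm_num)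
  have hlogn : Real.log 2 ≤ Real.log n :=
    Real.log_le_log (by norm_num) (by exact_mod_cast hn)
  have hL : (Nat.log 2 n : ℝ) * Real.log 2 ≤ Real.log n := by
    have hpow : (2:ℕ) ^ Nat.log 2 n ≤ n := Nat.pow_log_le_self 2 (by omega)
    have : Real.log ((2:ℝ) ^ Nat.log 2 n) ≤ Real.log n := by
      apply Real.log_le_log (by positivity)
      exact_mod_cast hpow
    rwa [Real.log_pow] at this
  have hE'0 : (0:ℝ) ≤ (matEx P' n : ℝ) := Nat.cast_nonneg _
  have hcast : (matEx P n : ℝ) ≤ ((Nat.log 2 n : ℝ) + 2) * (matEx P' n : ℝ) := by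
    have := hmain
    have h2 : ((matEx P n : ℕ) : ℝ) ≤ (((Nat.log 2 n + 2) * matEx P' n : ℕ) : ℝ) := by
      exact_mod_cast this
    push_cast at h2
    linarith
  have hfac : ((Nat.log 2 n : ℝ) + 2) ≤ 3 / Real.log 2 * Real.log n := by
    rw [div_mul_eq_mul_div, le_div_iff₀ hlog2]
    nlinarith
  calc (matEx P n : ℝ) ≤ ((Nat.log 2 n : ℝ) + 2) * (matEx P' n : ℝ) := hcast
    _ ≤ (3 / Real.log 2 * Real.log n) * (matEx P' n : ℝ) :=
        mul_le_mul_of_nonneg_right hfac hE'0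
    _ = 3 / Real.log 2 * (matEx P' n : ℝ) * Real.log n := by ring
end

section
/- For every 0–1 pattern P ∈ {0,1}^{k×l} with k, l ≥ 1, there is a constant C (depending only on k and l) such that Ex(P, n) ≤ C · n^{2 − 1/min(k,l)} for all n ≥ 1. -/
open Finset

lemma wt_transpose {n : ℕ} (A : Fin n → Fin n → Bool) :
    wt (fun i j => A j i) = wt A := by
  unfold wt
  exact Finset.card_bij' (fun p _ => p.swap) (fun p _ => p.swap)
    (by simp) (by simp) (by simp) (by simp)

lemma core (k l n : ℕ) (hk : 1 ≤ k) (hl : 1 ≤ l) (P : Fin k → Fin l → Prop)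
    (A : Fin n → Fin n → Bool) (hA : ¬ PatContains P A) (hn : 1 ≤ n) :
    (wt A : ℝ) ≤ (k + l : ℝ) * (n : ℝ) ^ ((2 : ℝ) - 1 / (l : ℝ)) := by
  classical
  set R : Fin n → Finset (Fin n) := fun i => univ.filter (fun j => A i j = true) with hR
  set d : Fin n → ℕ := fun i => (R i).card with hd
  -- weight = sum of row degrees
  have hwt : wt A = ∑ i, d i := by
    rw [wt, Finset.card_filter, Fintype.sum_prod_type]
    refine Finset.sum_congr rfl fun i _ => ?_
    rw [hd, hR, ← Finset.card_filter]
  -- each l-set of columns is fully contained in fewer than k rows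
  have hfib : ∀ S : Finset (Fin n), S.card = l →
      (univ.filter fun i => S ⊆ R i).card ≤ k - 1 := by
    intro S hS
    by_contra hcon
    push_neg at hcon
    have hk' : k ≤ (univ.filter fun i => S ⊆ R i).card := by omega
    obtain ⟨T, hTsub, hTcard⟩ := Finset.exists_subset_card_eq hk'
    apply hA
    refine ⟨fun i => (T.orderIsoOfFin hTcard i : Fin n),
      fun j => (S.orderIsoOfFin hS j : Fin n), ?_, ?_, ?_⟩
    · intro a b hab
      exact (T.orderIsoOfFin hTcard).strictMono hab
    · intro a b hab
      exact (S.orderIsoOfFin hS).strictMono hab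
    · intro i j _
      have h1 : ((T.orderIsoOfFin hTcard i : Fin n)) ∈ T := (T.orderIsoOfFin hTcard i).2
      have h2 := hTsub h1
      rw [Finset.mem_filter] at h2
      have h3 : ((S.orderIsoOfFin hS j : Fin n)) ∈ S := (S.orderIsoOfFin hS j).2
      have h4 := h2.2 h3
      rw [hR, Finset.mem_filter] at h4
      exact h4.2
  -- double counting
  have hcount : ∑ i, (d i).choose l ≤ (k - 1) * n.choose l := by
    have h1 : ∀ i : Fin n, (d i).choose l =
        ∑ S ∈ Finset.powersetCard l (univ : Finset (Fin n)), if S ⊆ R i then 1 else 0 := by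
      intro i
      rw [← Finset.card_filter]
      have heq : Finset.filter (· ⊆ R i) (Finset.powersetCard l (univ : Finset (Fin n)))
          = (R i).powersetCard l := by
        ext S
        simp only [Finset.mem_filter, Finset.mem_powersetCard, Finset.subset_univ, true_and]
        tauto
      rw [heq, Finset.card_powersetCard]
    have h2 : ∑ i, (d i).choose l
        = ∑ S ∈ Finset.powersetCard l (univ : Finset (Fin n)),
            ∑ i, if S ⊆ R i then 1 else 0 := by
      rw [← Finset.sum_comm]
      exact Finset.sum_congr rfl fun i _ => h1 i
    rw [h2]
    have h3 : ∀ S ∈ Finset.powersetCard l (univ : Finset (Fin n)),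
        (∑ i, if S ⊆ R i then 1 else 0) ≤ k - 1 := by
      intro S hS
      rw [← Finset.card_filter]
      exact hfib S (Finset.mem_powersetCard.mp hS).2
    calc ∑ S ∈ Finset.powersetCard l (univ : Finset (Fin n)),
            (∑ i, if S ⊆ R i then 1 else 0)
        ≤ ∑ _S ∈ Finset.powersetCard l (univ : Finset (Fin n)), (k-1) :=
          Finset.sum_le_sum h3
      _ = (Finset.powersetCard l (univ : Finset (Fin n))).card * (k-1) := by
          rw [Finset.sum_const, smul_eq_mul]
      _ = (k - 1) * n.choose l := by
          rw [Finset.card_powersetCard, Finset.card_univ, Fintype.card_fin, mul_comm]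
  -- nat bound on sum of (d i + 1 - l)^l
  have hnat : ∑ i, (d i + 1 - l) ^ l ≤ (k - 1) * n ^ l := by
    have s1 : ∑ i, (d i + 1 - l) ^ l ≤ ∑ i, (d i).descFactorial l :=
      Finset.sum_le_sum fun i _ => Nat.pow_sub_le_descFactorial (d i) l
    have s2 : ∑ i, (d i).descFactorial l = Nat.factorial l * ∑ i, (d i).choose l := by
      rw [Finset.mul_sum]
      exact Finset.sum_congr rfl fun i _ => Nat.descFactorial_eq_factorial_mul_choose _ _
    have s3 : Nat.factorial l * ∑ i, (d i).choose l ≤ Nat.factorial l * ((k - 1) * n.choose l) :=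
      Nat.mul_le_mul_left _ hcount
    have s4 : Nat.factorial l * ((k - 1) * n.choose l) = (k - 1) * n.descFactorial l := by
      rw [Nat.descFactorial_eq_factorial_mul_choose]; ring
    have s5 : (k - 1) * n.descFactorial l ≤ (k - 1) * n ^ l :=
      Nat.mul_le_mul_left _ (Nat.descFactorial_le_pow n l)
    omega
  -- move to reals
  set e : Fin n → ℝ := fun i => ((d i + 1 - l : ℕ) : ℝ) with he
  have hepos : ∀ i ∈ (univ : Finset (Fin n)), (0:ℝ) ≤ e i := fun i _ => Nat.cast_nonneg _
  have hsume : (wt A : ℝ) - n * l ≤ ∑ i, e i := by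
    have h1 : ∀ i : Fin n, (d i : ℝ) - l ≤ e i := by
      intro i
      show (d i : ℝ) - (l:ℝ) ≤ ((d i + 1 - l : ℕ) : ℝ)
      rcases le_total l (d i + 1) with h | h
      · rw [Nat.cast_sub h]; push_cast; linarith
      · have h0 : d i + 1 - l = 0 := Nat.sub_eq_zero_of_le h
        have : (d i : ℝ) + 1 ≤ l := by exact_mod_cast Nat.cast_le.mpr h
        simp only [h0, Nat.cast_zero]
        linarith
    have h2 : ∑ i, ((d i : ℝ) - l) ≤ ∑ i, e i := Finset.sum_le_sum fun i _ => h1 i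
    rw [Finset.sum_sub_distrib, Finset.sum_const, Finset.card_univ, Fintype.card_fin] at h2
    have h3 : (wt A : ℝ) = ∑ i, (d i : ℝ) := by rw [hwt]; push_cast; rfl
    rw [h3]
    simp only [nsmul_eq_mul] at h2
    linarith
  -- sum of l-th powers bound, in reals
  have hsumelp : ∑ i, e i ^ l ≤ ((k:ℝ) - 1) * (n:ℝ) ^ l := by
    have h := Nat.cast_le (α := ℝ) |>.mpr hnat
    push_cast at h
    have hcast : ((k - 1 : ℕ) : ℝ) ≤ (k:ℝ) - 1 + 1 - 1 := by
      rw [Nat.cast_sub hk]; push_cast; ring_nf; exact le_refl _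
    have hck : ((k - 1 : ℕ) : ℝ) = (k:ℝ) - 1 := by rw [Nat.cast_sub hk]; push_cast; ring
    calc ∑ i, e i ^ l = ((∑ i, (d i + 1 - l)^l : ℕ) : ℝ) := by push_cast [he]; rfl
      _ ≤ (((k-1) * n ^ l : ℕ) : ℝ) := Nat.cast_le.mpr hnat
      _ = ((k:ℝ) - 1) * (n:ℝ)^l := by rw [Nat.cast_mul, hck, Nat.cast_pow]
  -- power mean
  obtain ⟨l', rfl⟩ : ∃ l', l = l' + 1 := ⟨l - 1, by omega⟩
  have hpm := pow_sum_div_card_le_sum_pow (s := (univ : Finset (Fin n))) hepos l'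
  rw [Finset.card_univ, Fintype.card_fin] at hpm
  have hnpos : (0:ℝ) < n := by exact_mod_cast hn
  have hsum_pow : (∑ i, e i) ^ (l'+1) ≤ ((k:ℝ) - 1) * (n:ℝ) ^ (2*(l'+1) - 1) := by
    rw [div_le_iff₀ (by positivity)] at hpm
    calc (∑ i, e i) ^ (l'+1) ≤ (∑ i, e i ^ (l'+1)) * (n:ℝ)^l' := hpm
      _ ≤ (((k:ℝ) - 1) * (n:ℝ)^(l'+1)) * (n:ℝ)^l' := by
          apply mul_le_mul_of_nonneg_right hsumelp (by positivity)
      _ = ((k:ℝ) - 1) * (n:ℝ) ^ (2*(l'+1) - 1) := by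
          rw [mul_assoc, ← pow_add]
          congr 2
          omega
  -- the target power
  set X : ℝ := (n : ℝ) ^ ((2 : ℝ) - 1 / ((l'+1 : ℕ) : ℝ)) with hX
  have hXpos : 0 < X := Real.rpow_pos_of_pos hnpos _
  have hXpow : X ^ (l'+1) = (n:ℝ) ^ (2*(l'+1) - 1) := by
    rw [hX, ← Real.rpow_natCast ((n:ℝ) ^ ((2:ℝ) - 1/((l'+1:ℕ):ℝ))) (l'+1),
      ← Real.rpow_mul (le_of_lt hnpos), ← Real.rpow_natCast (n:ℝ) (2*(l'+1)-1)]
    congr 1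
    have hl1 : ((l'+1 : ℕ) : ℝ) ≠ 0 := by positivity
    field_simp
    simp [Nat.cast_sub (by omega : 1 ≤ 2*(l'+1))]
  have hkey : ∑ i, e i ≤ (k:ℝ) * X := by
    have h1 : (∑ i, e i) ^ (l'+1) ≤ ((k:ℝ) * X) ^ (l'+1) := by
      rw [mul_pow, hXpow]
      calc (∑ i, e i) ^ (l'+1) ≤ ((k:ℝ) - 1) * (n:ℝ) ^ (2*(l'+1) - 1) := hsum_pow
        _ ≤ (k:ℝ)^(l'+1) * (n:ℝ) ^ (2*(l'+1) - 1) := by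
            apply mul_le_mul_of_nonneg_right _ (by positivity)
            have hk1 : (1:ℝ) ≤ (k:ℝ) := by exact_mod_cast hk
            calc (k:ℝ) - 1 ≤ (k:ℝ) := by linarith
              _ ≤ (k:ℝ)^(l'+1) := le_self_pow₀ (by linarith) (by omega)
    have h2 : (0:ℝ) ≤ ∑ i, e i := Finset.sum_nonneg hepos
    have h3 : (0:ℝ) ≤ (k:ℝ) * X := by positivity
    exact (pow_le_pow_iff_left₀ h2 h3 (by omega)).mp h1
  -- n ≤ X
  have hnX : (n:ℝ) ≤ X := by
    rw [hX]
    nth_rewrite 1 [← Real.rpow_one (n:ℝ)]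
    apply Real.rpow_le_rpow_of_exponent_le (by exact_mod_cast hn)
    have : (1:ℝ) ≤ ((l'+1:ℕ):ℝ) := by exact_mod_cast Nat.one_le_iff_ne_zero.mpr (by omega)
    have h1 : 1/((l'+1:ℕ):ℝ) ≤ 1 := by
      rw [div_le_one (by positivity)]; exact this
    linarith
  -- finish
  have hfin : (wt A : ℝ) ≤ (k:ℝ) * X + (n:ℝ) * (l'+1) := by
    have := hsume
    push_cast at this
    linarith
  have hlcast : ((l'+1 : ℕ):ℝ) = (l' : ℝ) + 1 := by push_cast; ring
  calc (wt A : ℝ) ≤ (k:ℝ) * X + (n:ℝ) * ((l':ℝ)+1) := by linarith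
    _ ≤ (k:ℝ) * X + ((l':ℝ)+1) * X := by
        have : (n:ℝ) * ((l':ℝ)+1) ≤ ((l':ℝ)+1) * X := by
          rw [mul_comm]
          apply mul_le_mul_of_nonneg_left hnX (by positivity)
        linarith
    _ = ((k:ℝ) + ((l'+1:ℕ):ℝ)) * X := by push_cast; ring

/-- Kővári–Sós–Turán: for every `k × l` pattern `P`,
`Ex(P,n) = O(n^{2 − 1/min(k,l)})`, with constant depending only on `k` and `l`. -/
theorem stmt14 (k l : ℕ) (hk : 1 ≤ k) (hl : 1 ≤ l) :
    ∃ C : ℝ, ∀ P : Fin k → Fin l → Prop, ∀ n : ℕ, 1 ≤ n →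
      (matEx P n : ℝ) ≤ C * (n : ℝ) ^ ((2 : ℝ) - 1 / (min k l : ℝ)) := by
  refine ⟨(k : ℝ) + l, fun P n hn => ?_⟩
  have hXpos : (0:ℝ) < (n : ℝ) ^ ((2 : ℝ) - 1 / (min k l : ℝ)) :=
    Real.rpow_pos_of_pos (by exact_mod_cast hn) _
  have hCpos : (0:ℝ) ≤ (k:ℝ) + l := by positivity
  set S : Set ℕ := {w | ∃ A : Fin n → Fin n → Bool, ¬ PatContains P A ∧ wt A = w} with hS
  rcases Set.eq_empty_or_nonempty S with hSe | hSne
  · rw [matEx, ← hS, hSe, csSup_empty]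
    norm_num
    positivity
  · have hbdd : BddAbove S := by
      refine ⟨n * n, fun w hw => ?_⟩
      obtain ⟨A, _, hwA⟩ := hw
      rw [← hwA, wt]
      calc (univ.filter (fun p : Fin n × Fin n => A p.1 p.2 = true)).card
          ≤ (univ : Finset (Fin n × Fin n)).card := Finset.card_filter_le _ _
        _ = n * n := by simp
    have hmem : matEx P n ∈ S := Nat.sSup_mem hSne hbdd
    obtain ⟨A, hA, hwA⟩ := hmem
    rw [← hwA]
    rcases le_total l k with hlk | hkl
    · -- min k l = l
      have hmin : min (k:ℝ) (l:ℝ) = (l:ℝ) := min_eq_right (by exact_mod_cast hlk)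
      rw [hmin]
      exact core k l n hk hl P A hA hn
    · -- min k l = k ; transpose
      have hmin : min (k:ℝ) (l:ℝ) = (k:ℝ) := min_eq_left (by exact_mod_cast hkl)
      rw [hmin]
      have hA' : ¬ PatContains (fun (i : Fin l) (j : Fin k) => P j i)
          (fun i j => A j i) := by
        intro ⟨r, c, hr, hc, hmap⟩
        exact hA ⟨c, r, hc, hr, fun i j hP => hmap j i hP⟩
      have := core l k n hl hk (fun i j => P j i) (fun i j => A j i) hA' hn
      rw [wt_transpose] at this
      calc (wt A : ℝ) ≤ ((l:ℝ) + k) * (n : ℝ) ^ ((2 : ℝ) - 1 / (k : ℝ)) := this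
        _ = ((k:ℝ) + l) * (n : ℝ) ^ ((2 : ℝ) - 1 / (k : ℝ)) := by ring
end

section
/- Let A ∈ {0,1}^{k×l} with A(k, l) = 1 and B ∈ {0,1}^{k'×l'} with B(1, 1) = 1. Define the join A⊕B ∈ {0,1}^{(k+k'−1)×(l+l'−1)} by (A⊕B)(i,j) = A(i,j) if i ≤ k and j ≤ l, (A⊕B)(i,j) = B(i−k+1, j−l+1) if i ≥ k and j ≥ l, and 0 otherwise (the two copies overlap in the single cell (k,l)). Then Ex(A⊕B, n) ≤ Ex(A, n) + Ex(B, n) for all n ≥ 1. -/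
lemma wt_le_sq {m n : ℕ} (M : Fin m → Fin n → Bool) : wt M ≤ m * n := by
  calc wt M ≤ (Finset.univ : Finset (Fin m × Fin n)).card := Finset.card_filter_le _ _
  _ = m * n := by simp

lemma le_matEx {k l : ℕ} (P : Fin k → Fin l → Prop) {n : ℕ}
    (M : Fin n → Fin n → Bool) (h : ¬ PatContains P M) : wt M ≤ matEx P n :=
  le_csSup ⟨n * n, by rintro w ⟨A, -, rfl⟩; exact wt_le_sq A⟩ ⟨M, h, rfl⟩

lemma wt_split {n : ℕ} (M N : Fin n → Fin n → Bool)
    (h : ∀ i j, N i j = true → M i j = true) :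
    wt M = wt N + wt (fun i j => M i j && !(N i j)) := by
  classical
  have e := Finset.card_filter_add_card_filter_not
    (s := Finset.univ.filter fun p : Fin n × Fin n => M p.1 p.2 = true)
    (p := fun p => N p.1 p.2 = true)
  have e1 : (Finset.univ.filter fun p : Fin n × Fin n => M p.1 p.2 = true).filter
      (fun p => N p.1 p.2 = true)
      = Finset.univ.filter fun p : Fin n × Fin n => N p.1 p.2 = true := by
    ext p
    simp only [Finset.mem_filter, Finset.mem_univ, true_and]
    exact ⟨fun hp => hp.2, fun hp => ⟨h _ _ hp, hp⟩⟩
  have e2 : (Finset.univ.filter fun p : Fin n × Fin n => M p.1 p.2 = true).filter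
      (fun p => ¬ N p.1 p.2 = true)
      = Finset.univ.filter
        fun p : Fin n × Fin n => (fun i j => M i j && !(N i j)) p.1 p.2 = true := by
    ext p
    simp only [Finset.mem_filter, Finset.mem_univ, true_and, Bool.and_eq_true,
      Bool.not_eq_true', Bool.not_eq_true]
  rw [e1, e2] at e
  unfold wt
  omega

/-- The predicate: entry `(i,j)` of `M` is a 1 completing a copy of `A` whose
southeast corner is at `(i,j)`. -/
def CompletesA {k l n : ℕ} (hk : 1 ≤ k) (hl : 1 ≤ l) (A : Fin k → Fin l → Prop)
    (M : Fin n → Fin n → Bool) (i j : Fin n) : Prop :=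
  M i j = true ∧ ∃ (r : Fin k → Fin n) (c : Fin l → Fin n),
    StrictMono r ∧ StrictMono c ∧ r ⟨k - 1, by omega⟩ = i ∧ c ⟨l - 1, by omega⟩ = j ∧
    ∀ a b, A a b → M (r a) (c b) = true

/-- Keszegh's joining: if `A` has a 1 in its southeast corner and `B` has a 1 in its
northwest corner, then the join `A ⊕ B` (overlapping the two corners in one cell)
satisfies `Ex(A ⊕ B, n) ≤ Ex(A,n) + Ex(B,n)`. -/
theorem stmt15 (k l k' l' : ℕ) (hk : 1 ≤ k) (hl : 1 ≤ l) (hk' : 1 ≤ k') (hl' : 1 ≤ l')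
    (A : Fin k → Fin l → Prop) (B : Fin k' → Fin l' → Prop)
    (hA : A ⟨k - 1, by omega⟩ ⟨l - 1, by omega⟩)
    (hB : B ⟨0, by omega⟩ ⟨0, by omega⟩) :
    ∀ n : ℕ, 1 ≤ n →
      matEx (fun (i : Fin (k + k' - 1)) (j : Fin (l + l' - 1)) =>
          (∃ (hi : i.val < k) (hj : j.val < l), A ⟨i.val, hi⟩ ⟨j.val, hj⟩) ∨
          (k - 1 ≤ i.val ∧ l - 1 ≤ j.val ∧
            B ⟨i.val - (k - 1), by have := i.isLt; omega⟩
              ⟨j.val - (l - 1), by have := j.isLt; omega⟩)) n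
        ≤ matEx A n + matEx B n := by
  classical
  intro n hn
  apply csSup_le
  · -- nonempty: the zero matrix avoids the join (it has a 1-entry as a pattern)
    refine ⟨0, fun _ _ => false, ?_, by simp [wt]⟩
    rintro ⟨r, c, -, -, hcopy⟩
    have hcorner := hcopy ⟨k - 1, by omega⟩ ⟨l - 1, by omega⟩
      (Or.inl ⟨by exact Nat.sub_lt hk Nat.one_pos, by exact Nat.sub_lt hl Nat.one_pos, hA⟩)
    simp at hcorner
  · rintro w ⟨M, hM, rfl⟩
    set MB : Fin n → Fin n → Bool :=
      fun i j => decide (CompletesA hk hl A M i j) with hMBdef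
    set MA : Fin n → Fin n → Bool := fun i j => M i j && !(MB i j) with hMAdef
    have hMB_iff : ∀ i j, MB i j = true ↔ CompletesA hk hl A M i j := by
      intro i j; simp [hMBdef]
    have hMBM : ∀ i j, MB i j = true → M i j = true := by
      intro i j h; exact ((hMB_iff i j).1 h).1
    have hMAM : ∀ i j, MA i j = true → M i j = true := by
      intro i j h; rw [hMAdef] at h
      simp only [Bool.and_eq_true] at h; exact h.1
    -- MA avoids A
    have hAavoid : ¬ PatContains A MA := by
      rintro ⟨r, c, hr, hc, hcopy⟩
      have hcorner := hcopy ⟨k - 1, by omega⟩ ⟨l - 1, by omega⟩ hA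
      have hC : CompletesA hk hl A M (r ⟨k - 1, by omega⟩) (c ⟨l - 1, by omega⟩) :=
        ⟨hMAM _ _ hcorner, r, c, hr, hc, rfl, rfl, fun a b hab => hMAM _ _ (hcopy a b hab)⟩
      rw [hMAdef] at hcorner
      simp only [Bool.and_eq_true, Bool.not_eq_true'] at hcorner
      exact absurd ((hMB_iff _ _).2 hC) (by simp [hcorner.2])
    -- MB avoids B
    have hBavoid : ¬ PatContains B MB := by
      rintro ⟨r', c', hr', hc', hcopy'⟩
      have h0 : MB (r' ⟨0, by omega⟩) (c' ⟨0, by omega⟩) = true := hcopy' _ _ hB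
      obtain ⟨hM0, r, c, hr, hc, hrk, hcl, hcopyA⟩ := (hMB_iff _ _).1 h0
      -- build the joined row and column maps
      set R : Fin (k + k' - 1) → Fin n := fun i =>
        if h : i.val < k then r ⟨i.val, h⟩
        else r' ⟨i.val - (k - 1), by have := i.isLt; omega⟩ with hRdef
      set C : Fin (l + l' - 1) → Fin n := fun j =>
        if h : j.val < l then c ⟨j.val, h⟩
        else c' ⟨j.val - (l - 1), by have := j.isLt; omega⟩ with hCdef
      have hr0 : r ⟨k - 1, by omega⟩ = r' ⟨0, by omega⟩ := hrk
      have hc0 : c ⟨l - 1, by omega⟩ = c' ⟨0, by omega⟩ := hcl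
      -- R agrees with r' on the upper part
      have hRr' : ∀ (i : Fin (k + k' - 1)) (hik : k - 1 ≤ i.val),
          R i = r' ⟨i.val - (k - 1), by have := i.isLt; omega⟩ := by
        intro i hik
        rw [hRdef]
        by_cases h : i.val < k
        · have hieq : i.val = k - 1 := by omega
          simp only [dif_pos h]
          have h1 : (⟨i.val, h⟩ : Fin k) = ⟨k - 1, by omega⟩ := by
            apply Fin.ext; simpa using hieq
          rw [h1, hr0]
          congr 1
          apply Fin.ext
          simp [hieq]
        · simp only [dif_neg h]
      have hCc' : ∀ (j : Fin (l + l' - 1)) (hjl : l - 1 ≤ j.val),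
          C j = c' ⟨j.val - (l - 1), by have := j.isLt; omega⟩ := by
        intro j hjl
        rw [hCdef]
        by_cases h : j.val < l
        · have hjeq : j.val = l - 1 := by omega
          simp only [dif_pos h]
          have h1 : (⟨j.val, h⟩ : Fin l) = ⟨l - 1, by omega⟩ := by
            apply Fin.ext; simpa using hjeq
          rw [h1, hc0]
          congr 1
          apply Fin.ext
          simp [hjeq]
        · simp only [dif_neg h]
      -- strict monotonicity of R
      have hRmono : StrictMono R := by
        intro i j hij
        have hij' : i.val < j.val := hij
        rw [hRdef]
        by_cases hi : i.val < k <;> by_cases hj : j.val < k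
        · simp only [dif_pos hi, dif_pos hj]
          exact hr (by exact hij')
        · simp only [dif_pos hi, dif_neg hj]
          rcases lt_or_eq_of_le (show i.val ≤ k - 1 by omega) with h1 | h1
          · calc r ⟨i.val, hi⟩ < r ⟨k - 1, by omega⟩ := hr (by simpa using h1)
              _ = r' ⟨0, by omega⟩ := hr0
              _ ≤ r' ⟨j.val - (k - 1), by have := j.isLt; omega⟩ :=
                  hr'.monotone (by simp)
          · have h2 : (⟨i.val, hi⟩ : Fin k) = ⟨k - 1, by omega⟩ := by
              apply Fin.ext; simpa using h1
            rw [h2, hr0]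
            exact hr' (by simp only [Fin.mk_lt_mk]; omega)
        · omega
        · simp only [dif_neg hi, dif_neg hj]
          exact hr' (by simp only [Fin.mk_lt_mk]; omega)
      have hCmono : StrictMono C := by
        intro i j hij
        have hij' : i.val < j.val := hij
        rw [hCdef]
        by_cases hi : i.val < l <;> by_cases hj : j.val < l
        · simp only [dif_pos hi, dif_pos hj]
          exact hc (by exact hij')
        · simp only [dif_pos hi, dif_neg hj]
          rcases lt_or_eq_of_le (show i.val ≤ l - 1 by omega) with h1 | h1
          · calc c ⟨i.val, hi⟩ < c ⟨l - 1, by omega⟩ := hc (by simpa using h1)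
              _ = c' ⟨0, by omega⟩ := hc0
              _ ≤ c' ⟨j.val - (l - 1), by have := j.isLt; omega⟩ :=
                  hc'.monotone (by simp)
          · have h2 : (⟨i.val, hi⟩ : Fin l) = ⟨l - 1, by omega⟩ := by
              apply Fin.ext; simpa using h1
            rw [h2, hc0]
            exact hc' (by simp only [Fin.mk_lt_mk]; omega)
        · omega
        · simp only [dif_neg hi, dif_neg hj]
          exact hc' (by simp only [Fin.mk_lt_mk]; omega)
      -- M contains the join, contradiction
      apply hM
      refine ⟨R, C, hRmono, hCmono, ?_⟩
      rintro i j (⟨hi, hj, hAij⟩ | ⟨hik, hjl, hBij⟩)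
      · have hRi : R i = r ⟨i.val, hi⟩ := by rw [hRdef]; simp only [dif_pos hi]
        have hCj : C j = c ⟨j.val, hj⟩ := by rw [hCdef]; simp only [dif_pos hj]
        rw [hRi, hCj]
        exact hcopyA _ _ hAij
      · rw [hRr' i hik, hCc' j hjl]
        exact hMBM _ _ (hcopy' _ _ hBij)
    -- combine
    calc wt M = wt MB + wt MA := by
          rw [hMAdef]; exact wt_split M MB hMBM
      _ ≤ matEx B n + matEx A n := add_le_add (le_matEx B MB hBavoid) (le_matEx A MA hAavoid)
      _ = matEx A n + matEx B n := Nat.add_comm _ _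
end

section
/- Let H be a vertex-ordered graph on {1,…,m} that is not ordered bipartite, i.e., there is no index s ∈ {0,1,…,m} such that every edge of H joins {1,…,s} to {s+1,…,m}. Then Ex(H, n) = Θ(n²): there is a constant c > 0 such that c·n² ≤ Ex(H, n) ≤ n² for all sufficiently large n. -/
/-- Ordered containment of vertex-ordered graphs: a strictly increasing map
carrying edges to edges. -/
def OContains {m n : ℕ} (H : SimpleGraph (Fin m)) (G : SimpleGraph (Fin n)) : Prop :=
  ∃ f : Fin m → Fin n, StrictMono f ∧ ∀ i j, H.Adj i j → G.Adj (f i) (f j)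

/-- `oex H n` is the maximum number of edges of a vertex-ordered graph on `n` vertices
that does not contain `H`. -/
noncomputable def oex {m : ℕ} (H : SimpleGraph (Fin m)) (n : ℕ) : ℕ :=
  sSup {w | ∃ G : SimpleGraph (Fin n), ¬ OContains H G ∧ G.edgeSet.ncard = w}

/-- If a vertex-ordered graph `H` is not ordered bipartite (no cut `s` such that
all edges join `{1,…,s}` to `{s+1,…,m}`), then `Ex(H, n) = Θ(n²)`. -/
theorem stmt18 (m : ℕ) (H : SimpleGraph (Fin m))
    (h : ¬ ∃ s : ℕ, s ≤ m ∧ ∀ i j : Fin m, H.Adj i j →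
        (i.val < s ∧ s ≤ j.val) ∨ (j.val < s ∧ s ≤ i.val)) :
    ∃ (c : ℝ) (n₀ : ℕ), 0 < c ∧ ∀ n : ℕ, n₀ ≤ n →
      c * (n : ℝ) ^ 2 ≤ (oex H n : ℝ) ∧ (oex H n : ℝ) ≤ (n : ℝ) ^ 2 := by
  classical
  -- H has an edge
  have hedge : ∃ i j : Fin m, H.Adj i j := by
    by_contra hc
    push_neg at hc
    exact h ⟨0, Nat.zero_le m, fun i j hij => absurd hij (hc i j)⟩
  refine ⟨1/8, 2, by norm_num, fun n hn => ?_⟩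
  -- every element of the defining set is at most n^2
  have hbdd : ∀ w ∈ {w | ∃ G : SimpleGraph (Fin n), ¬ OContains H G ∧ G.edgeSet.ncard = w},
      w ≤ n ^ 2 := by
    rintro w ⟨G, -, rfl⟩
    have h1 : G.edgeSet.ncard ≤ Nat.card (Sym2 (Fin n)) := by
      have := Set.ncard_le_ncard (Set.subset_univ G.edgeSet) Set.finite_univ
      simpa [Set.ncard_univ] using this
    have h2 : Nat.card (Sym2 (Fin n)) = (n + 1).choose 2 := by
      simp [Nat.card_eq_fintype_card, Sym2.card]
    have h3 : (n + 1).choose 2 ≤ n ^ 2 := by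
      rw [Nat.choose_two_right]
      have hmul : (n + 1) * (n + 1 - 1) ≤ n ^ 2 * 2 := by
        simp only [Nat.add_sub_cancel]
        nlinarith
      calc (n + 1) * (n + 1 - 1) / 2 ≤ n ^ 2 * 2 / 2 := Nat.div_le_div_right hmul
        _ = n ^ 2 := Nat.mul_div_cancel _ (by norm_num)
    omega
  have hBdd : BddAbove {w | ∃ G : SimpleGraph (Fin n), ¬ OContains H G ∧ G.edgeSet.ncard = w} :=
    ⟨n ^ 2, fun w hw => hbdd w hw⟩
  -- nonempty (⊥ avoids H since H has an edge)
  have hbot : ¬ OContains H (⊥ : SimpleGraph (Fin n)) := by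
    rintro ⟨f, hf, hmap⟩
    obtain ⟨i, j, hij⟩ := hedge
    exact hmap i j hij
  have hne : (0 : ℕ) ∈ {w | ∃ G : SimpleGraph (Fin n), ¬ OContains H G ∧ G.edgeSet.ncard = w} :=
    ⟨⊥, hbot, by simp⟩
  have hupper : oex H n ≤ n ^ 2 := csSup_le ⟨0, hne⟩ hbdd
  -- lower bound construction
  set k := n / 2 with hkdef
  have hkn : k ≤ n := Nat.div_le_self _ _
  have h2n : 2 ≤ n := hn
  have hk1 : 1 ≤ k := by omega
  have hk2 : 2 * k ≤ n := by omega
  have hk3 : n ≤ 2 * k + 1 := by omega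
  let G₀ : SimpleGraph (Fin n) :=
    { Adj := fun x y => (x.val < k ∧ k ≤ y.val) ∨ (y.val < k ∧ k ≤ x.val)
      symm := ⟨fun x y hxy => hxy.symm⟩
      loopless := ⟨fun x hx => by rcases hx with ⟨h1, h2⟩ | ⟨h1, h2⟩ <;> omega⟩ }
  have hG₀adj : ∀ x y : Fin n, G₀.Adj x y ↔
      (x.val < k ∧ k ≤ y.val) ∨ (y.val < k ∧ k ≤ x.val) := fun _ _ => Iff.rfl
  -- G₀ does not contain H
  have hnc : ¬ OContains H G₀ := by
    rintro ⟨f, hf, hmap⟩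
    set F := Finset.univ.filter (fun i : Fin m => (f i).val < k) with hF
    set s := F.card with hs
    have key : ∀ i : Fin m, (f i).val < k ↔ i.val < s := by
      intro i
      constructor
      · intro hi
        have hsub : Finset.Iic i ⊆ F := by
          intro j hj
          simp only [Finset.mem_Iic] at hj
          simp only [hF, Finset.mem_filter, Finset.mem_univ, true_and]
          have hle : (f j).val ≤ (f i).val := hf.monotone hj
          omega
        have := Finset.card_le_card hsub
        rw [Fin.card_Iic] at this
        omega
      · intro hi
        by_contra hik
        push_neg at hik
        have hsub : F ⊆ Finset.Iio i := by
          intro j hj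
          simp only [hF, Finset.mem_filter, Finset.mem_univ, true_and] at hj
          have hlt : f j < f i := by
            rw [Fin.lt_def]; omega
          simpa [Finset.mem_Iio] using hf.lt_iff_lt.mp hlt
        have := Finset.card_le_card hsub
        rw [Fin.card_Iio] at this
        omega
    apply h
    refine ⟨s, ?_, ?_⟩
    · calc s ≤ Fintype.card (Fin m) := Finset.card_le_univ F
        _ = m := Fintype.card_fin m
    · intro i j hij
      rcases hmap i j hij with ⟨h1, h2⟩ | ⟨h1, h2⟩
      · exact Or.inl ⟨(key i).mp h1,
          le_of_not_gt fun hc => absurd ((key j).mpr hc) (not_lt.mpr h2)⟩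
      · exact Or.inr ⟨(key j).mp h1,
          le_of_not_gt fun hc => absurd ((key i).mpr hc) (not_lt.mpr h2)⟩
  -- edge count lower bound
  have hcard : k * (n - k) ≤ G₀.edgeSet.ncard := by
    let φ : Fin k × Fin (n - k) → Sym2 (Fin n) :=
      fun p => s(⟨p.1.val, by have := p.1.isLt; omega⟩, ⟨k + p.2.val, by have := p.2.isLt; omega⟩)
    have hinj : Function.Injective φ := by
      rintro ⟨a, b⟩ ⟨a', b'⟩ hab
      simp only [φ, Sym2.eq_iff, Fin.mk.injEq] at hab
      have ha := a.isLt
      have ha' := a'.isLt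
      rcases hab with ⟨h1, h2⟩ | ⟨h1, h2⟩ <;>
        · have hb := b.isLt
          have hb' := b'.isLt
          have e1 : a = a' := Fin.ext (by omega)
          have e2 : b = b' := Fin.ext (by omega)
          simp [e1, e2]
    have hsub : Set.range φ ⊆ G₀.edgeSet := by
      rintro e ⟨⟨a, b⟩, rfl⟩
      rw [SimpleGraph.mem_edgeSet]
      exact Or.inl ⟨a.isLt, Nat.le_add_right _ _⟩
    calc k * (n - k) = Nat.card (Fin k × Fin (n - k)) := by
          simp [Nat.card_eq_fintype_card]
      _ = Nat.card (Set.range φ) := (Nat.card_range_of_injective hinj).symm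
      _ = (Set.range φ).ncard := Nat.card_coe_set_eq _
      _ ≤ G₀.edgeSet.ncard := Set.ncard_le_ncard hsub (Set.toFinite _)
  have hlow : k * (n - k) ≤ oex H n :=
    le_trans hcard (le_csSup hBdd ⟨G₀, hnc, rfl⟩)
  constructor
  · -- 1/8 * n^2 ≤ oex H n
    have hcast : (k : ℝ) * ((n : ℝ) - (k : ℝ)) ≤ (oex H n : ℝ) := by
      have := (Nat.cast_le (α := ℝ)).mpr hlow
      push_cast [Nat.cast_sub hkn] at this
      linarith
    have c1 : (2 : ℝ) * (k : ℝ) ≤ (n : ℝ) := by exact_mod_cast hk2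
    have c2 : (n : ℝ) ≤ 2 * (k : ℝ) + 1 := by exact_mod_cast hk3
    have c3 : (2 : ℝ) ≤ (n : ℝ) := by exact_mod_cast h2n
    nlinarith [mul_nonneg (sub_nonneg.mpr c1) (sub_nonneg.mpr c2),
      sq_nonneg ((n : ℝ) - 2 * (k : ℝ))]
  · exact_mod_cast hupper
end
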